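/- Let λ, β and w be real constants with λ ≠ β, -1 < w < 1 and 3(1-w²) + 2β(β-λ) ≥ 0, and consider the coupled quintessence system x' = (1/2)[3(1-w)x³ - 3x(w(y²-1)+y²+1) + √6 λy²] + √(3/2)·β·(1-x²-y²), y' = -(3/2)y[(w-1)x² + (w+1)(y²-1) + √(2/3)λx]. Then the point B with coordinates x_B = √(3/2)(1+w)/(λ-β) and y_B = √(3(1-w²) + 2β(β-λ)) / (√2·|λ-β|) is a zero of the vector field, and the effective equation of state w_eff = x² - y² + w(1-x²-y²) evaluated at B equals (wλ + β)/(λ - β). In particular, for suitable λ and β this scaling critical point describes an accelerating universe (w_eff < -1/3) with 0 < Ω_φ = x_B² + y_B² < 1. -/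

import Mathlib

/-- `x`-component of the coupled quintessence vector field (coupling `Q = βκρφ̇`). -/
noncomputable def c14x (w lam β x y : ℝ) : ℝ :=
  1 / 2 * (3 * (1 - w) * x ^ 3 - 3 * x * (w * (y ^ 2 - 1) + y ^ 2 + 1)
      + Real.sqrt 6 * lam * y ^ 2)
    + Real.sqrt (3 / 2) * β * (1 - x ^ 2 - y ^ 2)

/-- `y`-component of the coupled quintessence vector field. -/
noncomputable def c14y (w lam x y : ℝ) : ℝ :=
  -(3 / 2) * y * ((w - 1) * x ^ 2 + (w + 1) * (y ^ 2 - 1) + Real.sqrt (2 / 3) * lam * x)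

/-- `x`-coordinate of the coupled scaling point `B`. -/
noncomputable def x14 (w lam β : ℝ) : ℝ := Real.sqrt (3 / 2) * (1 + w) / (lam - β)

/-- `y`-coordinate of the coupled scaling point `B`. -/
noncomputable def y14 (w lam β : ℝ) : ℝ :=
  Real.sqrt (3 * (1 - w ^ 2) + 2 * β * (β - lam)) / (Real.sqrt 2 * |lam - β|)

lemma X2_eq (w lam β : ℝ) : (x14 w lam β) ^ 2 = 3 * (1 + w) ^ 2 / (2 * (lam - β) ^ 2) := by
  unfold x14
  rw [div_pow, mul_pow, Real.sq_sqrt (by norm_num : (0:ℝ) ≤ 3/2),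
    show (3:ℝ)/2 * (1+w)^2 = 3*(1+w)^2/2 by ring, div_div]

lemma Y2_eq (w lam β : ℝ) (hy : 0 ≤ 3 * (1 - w ^ 2) + 2 * β * (β - lam)) :
    (y14 w lam β) ^ 2 = (3 * (1 - w ^ 2) + 2 * β * (β - lam)) / (2 * (lam - β) ^ 2) := by
  unfold y14
  rw [div_pow, mul_pow, Real.sq_sqrt hy, Real.sq_sqrt (by norm_num : (0:ℝ) ≤ 2), sq_abs]

lemma X3_eq (w lam β : ℝ) :
    (x14 w lam β) ^ 3 = Real.sqrt (3 / 2) * (3 * (1 + w) ^ 3 / (2 * (lam - β) ^ 3)) := by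
  unfold x14
  rw [div_pow, mul_pow,
    show Real.sqrt (3/2) ^ 3 = 3/2 * Real.sqrt (3/2) by
      rw [pow_succ, Real.sq_sqrt (by norm_num : (0:ℝ) ≤ 3/2)]]
  conv_rhs => rw [← div_div]
  ring

/-- Coupled quintessence with exponential potential and coupling `Q = βκρφ̇`: the point `B`
is a fixed point with effective equation of state `w_eff = (wλ+β)/(λ-β)`; in particular for
suitable `λ` and `β` this scaling critical point describes an accelerating universe
(`w_eff < -1/3`) with `0 < Ω_φ < 1`. -/
theorem coupled_quintessence_scaling_point (w lam β : ℝ) (hw1 : -1 < w) (hw2 : w < 1)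
    (hlb : lam ≠ β) (hy : 0 ≤ 3 * (1 - w ^ 2) + 2 * β * (β - lam)) :
    c14x w lam β (x14 w lam β) (y14 w lam β) = 0 ∧
    c14y w lam (x14 w lam β) (y14 w lam β) = 0 ∧
    (x14 w lam β) ^ 2 - (y14 w lam β) ^ 2
        + w * (1 - (x14 w lam β) ^ 2 - (y14 w lam β) ^ 2) = (w * lam + β) / (lam - β) ∧
    (∃ lam' β' : ℝ, lam' ≠ β' ∧ 0 ≤ 3 * (1 - w ^ 2) + 2 * β' * (β' - lam') ∧
      (w * lam' + β') / (lam' - β') < -(1 / 3) ∧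
      0 < (x14 w lam' β') ^ 2 + (y14 w lam' β') ^ 2 ∧
      (x14 w lam' β') ^ 2 + (y14 w lam' β') ^ 2 < 1) := by
  have hs : lam - β ≠ 0 := sub_ne_zero.mpr hlb
  have h1w : (0:ℝ) < 1 + w := by linarith
  refine ⟨?_, ?_, ?_, ?_⟩
  · -- c14x vanishes at B
    have h6 : Real.sqrt 6 = 2 * Real.sqrt (3/2) := by
      rw [show (6:ℝ) = 2^2 * (3/2) by norm_num, Real.sqrt_mul (by positivity),
        Real.sqrt_sq (by norm_num : (0:ℝ) ≤ 2)]
    simp only [c14x]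
    rw [X3_eq, X2_eq, Y2_eq _ _ _ hy, h6]
    simp only [x14]
    field_simp
    ring
  · -- c14y vanishes at B
    have hab : Real.sqrt (2/3) * Real.sqrt (3/2) = 1 := by
      rw [← Real.sqrt_mul (by norm_num : (0:ℝ) ≤ 2/3)]
      norm_num
    have hb : (w - 1) * (x14 w lam β) ^ 2 + (w + 1) * ((y14 w lam β) ^ 2 - 1)
        + Real.sqrt (2/3) * lam * (x14 w lam β) = 0 := by
      rw [X2_eq, Y2_eq _ _ _ hy]
      simp only [x14]
      rw [show Real.sqrt (2/3) * lam * (Real.sqrt (3/2) * (1+w) / (lam - β))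
          = (Real.sqrt (2/3) * Real.sqrt (3/2)) * (lam * (1+w) / (lam - β)) by ring, hab]
      field_simp
      ring
    simp only [c14y]
    rw [hb, mul_zero]
  · -- effective equation of state at B
    rw [X2_eq, Y2_eq _ _ _ hy]
    field_simp
    ring
  · -- explicit accelerating scaling solution
    refine ⟨(3*w+5)/4, -(21*w+19)/4, ?_, ?_, ?_, ?_, ?_⟩
    · intro h; linarith
    · nlinarith [sq_nonneg (1+w)]
    · have hd : (3*w+5)/4 - -(21*w+19)/4 = 6*(w+1) := by ring
      rw [hd, div_lt_iff₀ (by linarith)]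
      nlinarith
    all_goals {
      have hy' : 0 ≤ 3 * (1 - w ^ 2) + 2 * (-(21*w+19)/4) * ((-(21*w+19)/4) - (3*w+5)/4) := by
        nlinarith [sq_nonneg (1+w)]
      have hsum : (x14 w ((3*w+5)/4) (-(21*w+19)/4)) ^ 2 + (y14 w ((3*w+5)/4) (-(21*w+19)/4)) ^ 2
          = 7/8 := by
        rw [X2_eq, Y2_eq _ _ _ hy']
        rw [show ((3*w+5)/4 - -(21*w+19)/4) = 6*(w+1) by ring]
        have h6w : (0:ℝ) < 6*(w+1) := by linarith
        have hpos : (0:ℝ) < 2*(6*(w+1))^2 := by positivity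
        rw [← add_div, div_eq_iff hpos.ne']
        ring
      rw [hsum]
      norm_num }
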